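/- Define a loop-detour reduction on ascending Gauss codes: given an ascending code w with labels ordered by first appearance, let u be the label whose second occurrence is earliest and v the label whose first occurrence immediately precedes that second occurrence (v ≥ u); delete from w all occurrences of the labels u, u+1, …, v. Then the resulting code is again an ascending Gauss code (each remaining label appears exactly twice, first with -1 then with +1), and it has strictly fewer labels. Consequently, iterating this reduction from any ascending Gauss code terminates in the empty code after at most n steps, where n is the number of labels. -/

import Mathlib

abbrev GaussCode (α : Type) : Type := List (α × ℤ)

/-- Ascending: every label occurs first with sign `-1` and second with sign `+1`. -/
def IsAscending {α : Type} [DecidableEq α] (w : GaussCode α) : Prop :=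
  ∀ x ∈ w.map Prod.fst, w.filter (fun p => decide (p.1 = x)) = [(x, -1), (x, 1)]

/-- The list of labels in order of first appearance. -/
def firstOccs {α : Type} [DecidableEq α] : List α → List α
  | [] => []
  | a :: l => a :: firstOccs (l.filter (fun b => decide (b ≠ a)))
  termination_by l => l.length
  decreasing_by simpa using Nat.lt_succ_of_le ((List.length_filter_le _ _).trans_eq List.length_attach)

/-- Labels are ordered (increasing) by first appearance. -/
def Numbered (w : GaussCode ℕ) : Prop :=
  List.Chain' (· < ·) (firstOccs (w.map Prod.fst))

/-- The number of distinct labels of a code. -/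
def numLabels (w : GaussCode ℕ) : ℕ := (firstOccs (w.map Prod.fst)).length

/-- Position `i` of the code is a second occurrence of its label. -/
def isSecondOcc (w : GaussCode ℕ) (i : ℕ) : Prop :=
  ∃ p, w[i]? = some p ∧ ((w.take i).map Prod.fst).count p.1 = 1

/-- The loop-detour reduction: let `u` be the label whose second occurrence is
earliest (at position `i`) and `v` the label immediately preceding that second
occurrence; delete all occurrences of the labels `u, u+1, …, v`. -/
def Reduces (w w' : GaussCode ℕ) : Prop :=
  ∃ (i u v : ℕ) (s s' : ℤ),
    isSecondOcc w i ∧ (∀ j < i, ¬ isSecondOcc w j) ∧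
    w[i]? = some (u, s) ∧ w[i - 1]? = some (v, s') ∧
    w' = w.filter (fun p => decide (p.1 < u ∨ v < p.1))

/- ------------------ auxiliary lemmas ------------------ -/

lemma firstOccs_nil {α : Type} [DecidableEq α] : firstOccs ([] : List α) = [] := by
  rw [firstOccs]

lemma firstOccs_cons {α : Type} [DecidableEq α] (a : α) (l : List α) :
    firstOccs (a :: l) = a :: firstOccs (l.filter (fun b => decide (b ≠ a))) := by
  rw [firstOccs]

lemma mem_firstOccs {α : Type} [DecidableEq α] (x : α) (l : List α) :
    x ∈ firstOccs l ↔ x ∈ l := by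
  match l with
  | [] => simp [firstOccs_nil]
  | a :: t =>
    rw [firstOccs_cons]
    by_cases hx : x = a
    · simp [hx]
    · have ih := mem_firstOccs x (t.filter (fun b => decide (b ≠ a)))
      rw [List.mem_cons, List.mem_cons, ih, List.mem_filter]
      simp [hx]
  termination_by l.length
  decreasing_by simpa using Nat.lt_succ_of_le (List.length_filter_le _ t)

lemma firstOccs_filter {α : Type} [DecidableEq α] (q : α → Bool) (l : List α) :
    firstOccs (l.filter q) = (firstOccs l).filter q := by
  match l with
  | [] => simp [firstOccs_nil]
  | a :: t =>
    have key : (t.filter q).filter (fun b => decide (b ≠ a))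
        = (t.filter (fun b => decide (b ≠ a))).filter q := by
      rw [List.filter_filter, List.filter_filter]
      apply List.filter_congr
      intro b _
      rw [Bool.and_comm]
    have ih := firstOccs_filter q (t.filter (fun b => decide (b ≠ a)))
    by_cases hq : q a
    · rw [List.filter_cons_of_pos hq, firstOccs_cons, firstOccs_cons,
        List.filter_cons_of_pos hq, key, ih]
    · rw [List.filter_cons_of_neg hq, firstOccs_cons, List.filter_cons_of_neg hq, ← ih, ← key]
      congr 1
      rw [List.filter_filter]
      apply List.filter_congr
      intro b _
      by_cases hb : b = a <;> simp [hb, hq]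
  termination_by l.length
  decreasing_by simpa using Nat.lt_succ_of_le (List.length_filter_le _ t)

lemma firstOccs_prefix {α : Type} [DecidableEq α] (l₁ l₂ : List α) (h : l₁ <+: l₂) :
    firstOccs l₁ <+: firstOccs l₂ := by
  match l₁, l₂ with
  | [], l₂ => simp [firstOccs_nil]
  | a :: t₁, [] => simp [List.prefix_nil] at h
  | a :: t₁, b :: t₂ =>
    obtain ⟨rfl, h'⟩ := List.cons_prefix_cons.mp h
    rw [firstOccs_cons, firstOccs_cons]
    obtain ⟨t', ht'⟩ := firstOccs_prefix (t₁.filter (fun b => decide (b ≠ a)))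
      (t₂.filter (fun b => decide (b ≠ a)))
      (List.IsPrefix.filter _ h')
    exact ⟨t', by rw [List.cons_append, ← ht']⟩
  termination_by l₂.length
  decreasing_by simpa using Nat.lt_succ_of_le (List.length_filter_le _ t₂)

lemma map_fst_filter (q : ℕ → Bool) (l : GaussCode ℕ) :
    (l.filter (fun p => q p.1)).map Prod.fst = (l.map Prod.fst).filter q := by
  induction l with
  | nil => simp
  | cons a t ih =>
    by_cases h : q a.1 <;> simp [h, ih, List.filter_cons]

lemma count_eq_two (w : GaussCode ℕ) (hasc : IsAscending w) (x : ℕ)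
    (hx : x ∈ w.map Prod.fst) : (w.map Prod.fst).count x = 2 := by
  have h := hasc x hx
  have h2 : (w.map Prod.fst).count x = (w.filter (fun p => decide (p.1 = x))).length := by
    rw [List.count_eq_countP, List.countP_map, List.countP_eq_length_filter]
    congr 1
  rw [h2, h]
  rfl

/-- Step 1: a reduction of an ascending numbered code. -/
lemma reduce_step (w w' : GaussCode ℕ) (hasc : IsAscending w) (hnum : Numbered w)
    (hred : Reduces w w') :
    IsAscending w' ∧ Numbered w' ∧ numLabels w' < numLabels w := by
  obtain ⟨i, u, v, s, s', hsec, hmin, hiu, hiv, rfl⟩ := hred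
  set W := w.map Prod.fst with hW
  set q : ℕ → Bool := fun x => decide (x < u ∨ v < x) with hq
  have hmapf : (w.filter (fun p => decide (p.1 < u ∨ v < p.1))).map Prod.fst = W.filter q :=
    map_fst_filter q w
  -- basic facts
  obtain ⟨p, hp, hcnt⟩ := hsec
  rw [hiu] at hp
  injection hp with hp; subst hp
  have hcnt' : (W.take i).count u = 1 := by
    rwa [List.map_take] at hcnt
  have hilen : i < w.length := (List.getElem?_eq_some_iff.mp hiu).1
  have hipos : 1 ≤ i := by
    rcases Nat.eq_zero_or_pos i with h0 | h0
    · subst h0; simp at hcnt'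
    · exact h0
  have hWu : W[i]? = some u := by
    rw [hW, List.getElem?_map, hiu]; rfl
  have hWv : W[i-1]? = some v := by
    rw [hW, List.getElem?_map, hiv]; rfl
  have hvW : v ∈ W := List.mem_of_getElem? hWv
  have huW : u ∈ W := List.mem_of_getElem? hWu
  -- u ≤ v
  have huv : u ≤ v := by
    by_cases hne : u = v
    · exact le_of_eq hne
    · -- v does not occur in W.take (i-1)
      have hv2 : W.count v = 2 := count_eq_two w hasc v hvW
      have hvdrop : v ∈ W.drop (i-1) := by
        apply List.mem_of_getElem? (i := 0)
        rw [List.getElem?_drop]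
        simpa using hWv
      have hvtake : v ∉ W.take (i-1) := by
        intro hmem
        have hns := hmin (i-1) (by omega)
        have h1 : (W.take (i-1)).count v ≠ 1 := by
          intro hc
          exact hns ⟨(v, s'), hiv, by rwa [List.map_take]⟩
        have hsplit : (W.take (i-1)).count v + (W.drop (i-1)).count v = 2 := by
          rw [← List.count_append, List.take_append_drop, hv2]
        have hdpos : 1 ≤ (W.drop (i-1)).count v := List.count_pos_iff.mpr hvdrop
        have htpos : 1 ≤ (W.take (i-1)).count v := List.count_pos_iff.mpr hmem
        omega
      -- u occurs in W.take (i-1)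
      have htake_eq : W.take i = W.take (i-1) ++ [v] := by
        have : i = (i-1) + 1 := by omega
        rw [this, List.take_succ, hWv]
        rfl
      have hutake : u ∈ W.take (i-1) := by
        have : u ∈ W.take i := List.count_pos_iff.mp (by omega)
        rw [htake_eq, List.mem_append] at this
        rcases this with h | h
        · exact h
        · simp at h; exact absurd h hne
      -- use Numbered
      obtain ⟨t, ht⟩ := firstOccs_prefix (W.take (i-1)) W (List.take_prefix _ _)
      have hpw : List.Pairwise (· < ·) (firstOccs W) :=
        List.isChain_iff_pairwise.mp hnum
      rw [← ht] at hpw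
      have hufo : u ∈ firstOccs (W.take (i-1)) := (mem_firstOccs _ _).mpr hutake
      have hvfo : v ∈ t := by
        have hvW' : v ∈ firstOccs W := (mem_firstOccs _ _).mpr hvW
        rw [← ht, List.mem_append] at hvW'
        rcases hvW' with h | h
        · exact absurd ((mem_firstOccs _ _).mp h) hvtake
        · exact h
      have := (List.pairwise_append.mp hpw).2.2 u hufo v hvfo
      omega
  refine ⟨?_, ?_, ?_⟩
  · -- ascending
    intro x hx
    rw [hmapf] at hx
    obtain ⟨hxW, hqx⟩ := List.mem_filter.mp hx
    rw [List.filter_filter]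
    have : w.filter (fun a => decide (a.1 = x) && decide (a.1 < u ∨ v < a.1))
        = w.filter (fun a => decide (a.1 = x)) := by
      apply List.filter_congr
      intro p _
      by_cases hpx : p.1 = x
      · rw [hpx]
        simpa using of_decide_eq_true hqx
      · simp [hpx]
    rw [this]
    exact hasc x hxW
  · -- numbered
    unfold Numbered
    rw [hmapf, firstOccs_filter]
    exact List.isChain_iff_pairwise.mpr ((List.isChain_iff_pairwise.mp hnum).filter q)
  · -- fewer labels
    unfold numLabels
    rw [hmapf, firstOccs_filter]
    apply List.length_filter_lt_length_iff_exists.mpr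
    refine ⟨u, (mem_firstOccs _ _).mpr huW, ?_⟩
    simp [hq]; omega

/-- Step 2: any nonempty ascending code admits a reduction. -/
lemma exists_reduce (w : GaussCode ℕ) (hasc : IsAscending w) (hw : w ≠ []) :
    ∃ w', Reduces w w' := by
  classical
  have hlen : 0 < w.length := List.length_pos_iff.mpr hw
  set W := w.map Prod.fst with hW
  have hWlen : W.length = w.length := List.length_map _
  -- the last position is a second occurrence
  set m := w.length - 1 with hm
  have hmlt : m < w.length := by omega
  have hpm : w[m]? = some w[m] := List.getElem?_eq_getElem hmlt
  set p := w[m] with hpdef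
  have hpmW : W[m]? = some p.1 := by
    rw [hW, List.getElem?_map, hpm]; rfl
  have hp1W : p.1 ∈ W := List.mem_of_getElem? hpmW
  have h2 : W.count p.1 = 2 := count_eq_two w hasc p.1 hp1W
  have htake : W = W.take m ++ [p.1] := by
    have h1 : W.take (m + 1) = W := by
      apply List.take_of_length_le
      omega
    conv_lhs => rw [← h1, List.take_succ, hpmW]
    rfl
  have hcnt : (W.take m).count p.1 = 1 := by
    have := h2
    rw [htake, List.count_append] at this
    simpa using this
  have hsec : isSecondOcc w m := ⟨p, hpm, by rwa [List.map_take]⟩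
  have hex : ∃ j, isSecondOcc w j := ⟨m, hsec⟩
  set i := Nat.find hex with hi
  have hseci : isSecondOcc w i := Nat.find_spec hex
  have hmini : ∀ j < i, ¬ isSecondOcc w j := fun j hj => Nat.find_min hex hj
  obtain ⟨p', hp', hcnt'⟩ := hseci
  have hilen : i < w.length := (List.getElem?_eq_some_iff.mp hp').1
  have hipos : 1 ≤ i := by
    rcases Nat.eq_zero_or_pos i with h0 | h0
    · exfalso; rw [h0] at hcnt'; simp at hcnt'
    · exact h0
  have hi1 : i - 1 < w.length := by omega
  have hp'' : w[i-1]? = some w[i-1] := List.getElem?_eq_getElem hi1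
  refine ⟨_, i, p'.1, (w[i-1]).1, p'.2, (w[i-1]).2,
    ⟨p', hp', hcnt'⟩, hmini, by rwa [Prod.mk.eta], by rwa [Prod.mk.eta], rfl⟩

/-- Step 3: termination. -/
lemma termination_aux (n : ℕ) : ∀ (w : GaussCode ℕ), IsAscending w → Numbered w →
    numLabels w ≤ n →
    ∃ (k : ℕ) (seq : ℕ → GaussCode ℕ), k ≤ n ∧ seq 0 = w ∧ seq k = [] ∧
      ∀ j < k, Reduces (seq j) (seq (j + 1)) := by
  induction n with
  | zero =>
    intro w hasc hnum hle
    have hw : w = [] := by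
      have h0 : (firstOccs (w.map Prod.fst)).length = 0 := by
        have := hle; unfold numLabels at this; omega
      rw [List.length_eq_zero_iff] at h0
      cases w with
      | nil => rfl
      | cons a t =>
        exfalso
        rw [List.map_cons, firstOccs_cons] at h0
        simp at h0
    exact ⟨0, fun _ => [], le_refl 0, hw.symm, rfl, fun j hj => absurd hj (by omega)⟩
  | succ n ih =>
    intro w hasc hnum hle
    by_cases hw : w = []
    · exact ⟨0, fun _ => [], Nat.zero_le _, hw.symm, rfl, fun j hj => absurd hj (by omega)⟩
    · obtain ⟨w', hred⟩ := exists_reduce w hasc hw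
      obtain ⟨hasc', hnum', hlt⟩ := reduce_step w w' hasc hnum hred
      obtain ⟨k, seq, hk, h0, hk2, hstep⟩ := ih w' hasc' hnum' (by omega)
      refine ⟨k + 1, fun j => if j = 0 then w else seq (j - 1), by omega, by simp, ?_, ?_⟩
      · simpa using hk2
      · intro j hj
        match j with
        | 0 => simpa [h0] using hred
        | j + 1 =>
          have : Reduces (seq j) (seq (j + 1)) := hstep j (by omega)
          simpa using this

/-- the loop-detour reduction of an ascending Gauss code is again an
ascending Gauss code with strictly fewer labels; consequently iterating the
reduction from any ascending Gauss code with `n` labels terminates in the empty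
code after at most `n` steps. -/
theorem loop_detour_reduction :
    (∀ w w' : GaussCode ℕ, IsAscending w → Numbered w → Reduces w w' →
       IsAscending w' ∧ Numbered w' ∧ numLabels w' < numLabels w) ∧
    (∀ (w : GaussCode ℕ) (n : ℕ), IsAscending w → Numbered w → numLabels w = n →
       ∃ (k : ℕ) (seq : ℕ → GaussCode ℕ), k ≤ n ∧ seq 0 = w ∧ seq k = [] ∧
         ∀ j < k, Reduces (seq j) (seq (j + 1))) := by
  exact ⟨reduce_step, fun w n hasc hnum hn =>
    termination_aux n w hasc hnum (le_of_eq hn)⟩
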